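/- Let H be a 2-connected r-uniform hypergraph with n ≥ r ≥ 3, and let u, v be two distinct vertices. Then there exists a Berge cycle in H containing both u and v as defining vertices. -/

import Mathlib

open Finset SimpleGraph Walk

/-- A hypergraph (edge set `E`) is connected. -/
def HConnected {V : Type*} (E : Finset (Finset V)) : Prop :=
  ¬ ∃ A : Set V, A.Nonempty ∧ Aᶜ.Nonempty ∧ ∀ e ∈ E, (↑e ⊆ A ∨ ↑e ⊆ Aᶜ)

/-- `v` is a cut vertex of the hypergraph `E`: there is a partition
`V = {v} ∪ V₁ ∪ V₂` with `V₁, V₂` nonempty such that every hyperedge is contained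
in `{v} ∪ V₁` or in `{v} ∪ V₂`. -/
def HCutVertex {V : Type*} (E : Finset (Finset V)) (v : V) : Prop :=
  ∃ V₁ V₂ : Set V, V₁.Nonempty ∧ V₂.Nonempty ∧ Disjoint V₁ V₂ ∧
    v ∉ V₁ ∧ v ∉ V₂ ∧ (∀ x : V, x = v ∨ x ∈ V₁ ∨ x ∈ V₂) ∧
    ∀ e ∈ E, (↑e ⊆ insert v V₁ ∨ ↑e ⊆ insert v V₂)

/-- `e` is a cut hyperedge of `E`: there is a partition `V = V₁ ∪ V₂` with
`V₁, V₂` nonempty such that every hyperedge other than `e` is contained in `V₁`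
or in `V₂`. -/
def HCutEdge {V : Type*} (E : Finset (Finset V)) (e : Finset V) : Prop :=
  e ∈ E ∧ ∃ V₁ V₂ : Set V, V₁.Nonempty ∧ V₂.Nonempty ∧ Disjoint V₁ V₂ ∧
    (∀ x : V, x ∈ V₁ ∨ x ∈ V₂) ∧
    ∀ f ∈ E, f ≠ e → (↑f ⊆ V₁ ∨ ↑f ⊆ V₂)

/-- A hypergraph is 2-connected: connected, with no cut vertex and no cut hyperedge. -/
def HTwoConnected {V : Type*} (E : Finset (Finset V)) : Prop :=
  HConnected E ∧ (∀ v : V, ¬ HCutVertex E v) ∧ ∀ e : Finset V, ¬ HCutEdge E e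

/-- There is a Berge cycle in `E` containing both `u` and `v` as defining vertices:
distinct vertices `w_1, …, w_m` and distinct hyperedges `e_1, …, e_m` (`m ≥ 2`)
with `{w_i, w_{i+1}} ⊆ e_i` (indices mod `m`), and `u, v` among the `w_i`. -/
def HasBergeCycleThrough {V : Type*} (E : Finset (Finset V)) (u v : V) : Prop :=
  ∃ (m : ℕ) (w : Fin (m + 2) → V) (e : Fin (m + 2) → Finset V),
    Function.Injective w ∧ Function.Injective e ∧
    (∃ i, w i = u) ∧ (∃ j, w j = v) ∧
    ∀ i : Fin (m + 2), e i ∈ E ∧ w i ∈ e i ∧ w (i + 1) ∈ e i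



section GraphPart
variable {W : Type*} {G : SimpleGraph W}

lemma closed_mem_tail_support {s : W} (c : G.Walk s s) (hc : c ≠ Walk.nil) :
    s ∈ c.support.tail := by
  cases c with
  | nil => exact absurd rfl hc
  | cons h p => simpa using p.end_mem_support

lemma arc_paths [DecidableEq W] {w x : W} {c : G.Walk w w} (hc : c.IsCycle)
    (hx : x ∈ c.support) (hxw : x ≠ w) :
    (c.takeUntil x hx).IsPath ∧ (c.dropUntil x hx).IsPath := by
  have hspec := c.take_spec hx
  have hsupp : c.support = (c.takeUntil x hx).support ++ (c.dropUntil x hx).support.tail := by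
    rw [← support_append, hspec]
  have htail : c.support.tail
      = (c.takeUntil x hx).support.tail ++ (c.dropUntil x hx).support.tail := by
    conv_lhs => rw [hsupp, support_eq_cons (c.takeUntil x hx)]
    rfl
  have hnd : c.support.tail.Nodup := hc.support_nodup
  rw [htail, List.nodup_append] at hnd
  obtain ⟨hnd1, hnd2, hdisj⟩ := hnd
  have hwmem : w ∈ (c.dropUntil x hx).support.tail := by
    have := (c.dropUntil x hx).end_mem_support
    rw [support_eq_cons (c.dropUntil x hx), List.mem_cons] at this
    rcases this with h | h
    · exact absurd h.symm hxw
    · exact h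
  have hxmem : x ∈ (c.takeUntil x hx).support.tail := by
    have := (c.takeUntil x hx).end_mem_support
    rw [support_eq_cons (c.takeUntil x hx), List.mem_cons] at this
    rcases this with h | h
    · exact absurd h hxw
    · exact h
  constructor
  · rw [isPath_def, support_eq_cons (c.takeUntil x hx), List.nodup_cons]
    exact ⟨fun hw => hdisj _ hw _ hwmem rfl, hnd1⟩
  · rw [isPath_def, support_eq_cons (c.dropUntil x hx), List.nodup_cons]
    exact ⟨fun hx2 => hdisj _ hxmem _ hx2 rfl, hnd2⟩

lemma exists_prefix_until {a b : W} (p : G.Walk a b) (S : List W) (hb : b ∈ S) :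
    ∃ (x : W) (q : G.Walk a x), x ∈ S ∧ (∀ y ∈ q.support, y ∈ S → y = x) ∧
      (∀ y ∈ q.support, y ∈ p.support) := by
  induction p with
  | nil => exact ⟨_, Walk.nil, hb, fun y hy _ => by simpa using hy, fun y hy => hy⟩
  | @cons a' c' b' h p ih =>
    by_cases ha : a' ∈ S
    · exact ⟨_, Walk.nil, ha, fun y hy _ => by simpa using hy, fun y hy => by
        simp only [support_nil, List.mem_singleton] at hy
        rw [hy, support_cons]; exact List.mem_cons_self⟩
    · obtain ⟨x, q, hxS, honly, hsub⟩ := ih hb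
      refine ⟨x, Walk.cons h q, hxS, ?_, ?_⟩
      · intro y hy hyS
        rw [support_cons, List.mem_cons] at hy
        rcases hy with rfl | hy
        · exact absurd hyS ha
        · exact honly y hy hyS
      · intro y hy
        rw [support_cons, List.mem_cons] at hy
        rw [support_cons, List.mem_cons]
        rcases hy with rfl | hy
        · exact Or.inl rfl
        · exact Or.inr (hsub y hy)

lemma graph_cycle_through [DecidableEq W] (G : SimpleGraph W)
    (hcut : ∀ w a b : W, a ≠ w → b ≠ w → ∃ p : G.Walk a b, w ∉ p.support)
    (hbridge : ∀ a b : W, G.Adj a b → ∃ p : G.Walk a b, s(a, b) ∉ p.edges) :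
    ∀ (k : ℕ) (u v : W), u ≠ v → ∀ p : G.Walk u v, p.length ≤ k →
      ∃ c : G.Walk v v, c.IsCycle ∧ u ∈ c.support := by
  intro k
  induction k with
  | zero =>
    intro u v huv p hp
    exact absurd (Walk.eq_of_length_eq_zero (Nat.le_zero.mp hp)) huv
  | succ k ih =>
    intro u v huv p hp
    obtain ⟨w, h, r, heq⟩ := Walk.exists_eq_cons_of_ne huv.symm p.bypass.reverse
    have hrlen : r.length ≤ k := by
      have h1 : p.bypass.reverse.length ≤ k + 1 := by
        rw [length_reverse]; exact le_trans p.length_bypass_le hp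
      rw [heq, length_cons] at h1; omega
    by_cases hwu : w = u
    · subst hwu
      obtain ⟨p0, hp0⟩ := hbridge w v h.symm
      refine ⟨Walk.cons h p0.bypass, ?_, ?_⟩
      · rw [Walk.cons_isCycle_iff]
        refine ⟨p0.bypass_isPath, fun hmem => ?_⟩
        rw [Sym2.eq_swap] at hmem
        exact hp0 (p0.edges_bypass_subset hmem)
      · rw [support_cons]
        exact List.mem_cons_of_mem _ p0.bypass.start_mem_support
    · have hne_uw : u ≠ w := fun he => hwu he.symm
      obtain ⟨C, hC, huC⟩ := ih u w hne_uw r.reverse (by rw [length_reverse]; exact hrlen)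
      by_cases hvC : v ∈ C.support
      · refine ⟨C.rotate v hvC, hC.rotate hvC, ?_⟩
        have h2 : u ∈ C.support.tail := by
          rw [support_eq_cons C, List.mem_cons] at huC
          rcases huC with rfl | h2
          · exact closed_mem_tail_support C hC.ne_nil
          · exact h2
        have h3 : u ∈ (C.rotate v hvC).support.tail := (support_rotate C v hvC).mem_iff.mpr h2
        exact List.mem_of_mem_tail h3
      · obtain ⟨R0, hR0⟩ := hcut w v u h.ne hne_uw
        obtain ⟨x, q0, hxC, honly0, hsub0⟩ := exists_prefix_until R0.bypass C.support huC
        set q := q0.bypass with hq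
        have hqsub : ∀ y ∈ q.support, y ∈ R0.bypass.support :=
          fun y hy => hsub0 y (q0.support_bypass_subset hy)
        have honly : ∀ y ∈ q.support, y ∈ C.support → y = x :=
          fun y hy => honly0 y (q0.support_bypass_subset hy)
        have hwq : w ∉ q.support :=
          fun hm => hR0 (R0.support_bypass_subset (hqsub _ hm))
        have hxw : x ≠ w := by
          rintro rfl; exact hwq q.end_mem_support
        obtain ⟨hA1, hA2⟩ := arc_paths hC hxC hxw
        have hu12 : u ∈ (C.takeUntil x hxC).support ∨ u ∈ (C.dropUntil x hxC).support := by
          rw [← mem_support_append_iff, take_spec]; exact huC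
        obtain ⟨B, hBpath, hBsub, huB⟩ : ∃ B : G.Walk w x, B.IsPath ∧
            (∀ y ∈ B.support, y ∈ C.support) ∧ u ∈ B.support := by
          rcases hu12 with h1 | h2
          · exact ⟨C.takeUntil x hxC, hA1,
              fun y hy => C.support_takeUntil_subset hxC hy, h1⟩
          · refine ⟨(C.dropUntil x hxC).reverse, hA2.reverse, fun y hy => ?_, ?_⟩
            · exact C.support_dropUntil_subset hxC (by rwa [support_reverse, List.mem_reverse] at hy)
            · rwa [support_reverse, List.mem_reverse]
        have hPpath : (B.append q.reverse).IsPath := by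
          rw [isPath_def, support_append, List.nodup_append]
          have hqrev : q.reverse.support.Nodup := by
            rw [isPath_def] at *
            exact (q0.bypass_isPath.reverse).support_nodup
          refine ⟨hBpath.support_nodup, ?_, ?_⟩
          · rw [support_eq_cons q.reverse] at hqrev
            exact hqrev.of_cons
          · intro y hyB _ hyT rfl
            have hxnot : x ∉ q.reverse.support.tail := by
              rw [support_eq_cons q.reverse, List.nodup_cons] at hqrev
              exact hqrev.1
            have hyq : y ∈ q.support := by
              have : y ∈ q.reverse.support := List.mem_of_mem_tail hyT
              rwa [support_reverse, List.mem_reverse] at this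
            have hyx : y ≠ x := fun he => hxnot (he ▸ hyT)
            exact hyx (honly y hyq (hBsub y hyB))
        have hedge : s(v, w) ∉ (B.append q.reverse).edges := by
          intro hmem
          rw [edges_append, List.mem_append] at hmem
          rcases hmem with h1 | h2
          · exact hvC (hBsub v (B.fst_mem_support_of_mem_edges h1))
          · have : w ∈ q.reverse.support := q.reverse.snd_mem_support_of_mem_edges h2
            rw [support_reverse, List.mem_reverse] at this
            exact hwq this
        refine ⟨Walk.cons h (B.append q.reverse),
          (Walk.cons_isCycle_iff _ h).mpr ⟨hPpath, hedge⟩, ?_⟩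
        rw [support_cons]
        exact List.mem_cons_of_mem _ ((mem_support_append_iff _ _).mpr (Or.inl huB))

end GraphPart

section IncidencePart
variable {V : Type*} (E : Finset (Finset V))

/-- The bipartite incidence graph of a hypergraph. -/
def incG : SimpleGraph (V ⊕ {e : Finset V // e ∈ E}) where
  Adj a b := (∃ (x : V) (e : {e : Finset V // e ∈ E}), a = Sum.inl x ∧ b = Sum.inr e ∧ x ∈ e.1) ∨
    (∃ (x : V) (e : {e : Finset V // e ∈ E}), b = Sum.inl x ∧ a = Sum.inr e ∧ x ∈ e.1)
  symm := by
    constructor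
    rintro a b (⟨x, e, h1, h2, h3⟩ | ⟨x, e, h1, h2, h3⟩)
    · exact Or.inr ⟨x, e, h1, h2, h3⟩
    · exact Or.inl ⟨x, e, h1, h2, h3⟩
  loopless := by
    constructor
    rintro a (⟨x, e, rfl, h2, _⟩ | ⟨x, e, h1, rfl, _⟩) <;> simp_all

variable {E}

lemma incG_adj_left {x : V} {e : {e : Finset V // e ∈ E}}
    (h : (incG E).Adj (Sum.inl x) (Sum.inr e)) : x ∈ e.1 := by
  rcases h with ⟨y, f, h1, h2, h3⟩ | ⟨y, f, h1, h2, h3⟩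
  · rw [Sum.inl.injEq] at h1; rw [Sum.inr.injEq] at h2; rw [h1, h2]; exact h3
  · exact absurd h2 (by simp)

lemma incG_adj_right {x : V} {e : {e : Finset V // e ∈ E}}
    (h : (incG E).Adj (Sum.inr e) (Sum.inl x)) : x ∈ e.1 := incG_adj_left h.symm

lemma incG_adj_of_mem {x : V} {e : {e : Finset V // e ∈ E}} (h : x ∈ e.1) :
    (incG E).Adj (Sum.inl x) (Sum.inr e) := Or.inl ⟨x, e, rfl, rfl, h⟩

/-- Reachability avoiding a vertex is closed under adjacency. -/
lemma avoid_closure {W : Type*} {G : SimpleGraph W} {a w z z' : W}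
    (h : ∃ p : G.Walk a z, w ∉ p.support) (hadj : G.Adj z z') (hne : z' ≠ w) :
    ∃ p : G.Walk a z', w ∉ p.support := by
  obtain ⟨p, hp⟩ := h
  refine ⟨p.append (Walk.cons hadj Walk.nil), ?_⟩
  rw [support_append]
  intro hmem
  rcases List.mem_append.mp hmem with h1 | h1
  · exact hp h1
  · simp only [support_cons, support_nil, List.tail_cons, List.mem_singleton] at h1
    exact hne h1.symm

lemma avoid_closure_edge {W : Type*} {G : SimpleGraph W} {a z z' : W} {s0 : Sym2 W}
    (h : ∃ p : G.Walk a z, s0 ∉ p.edges) (hadj : G.Adj z z') (hne : s(z, z') ≠ s0) :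
    ∃ p : G.Walk a z', s0 ∉ p.edges := by
  obtain ⟨p, hp⟩ := h
  refine ⟨p.append (Walk.cons hadj Walk.nil), ?_⟩
  rw [edges_append]
  intro hmem
  rcases List.mem_append.mp hmem with h1 | h1
  · exact hp h1
  · simp only [edges_cons, edges_nil, List.mem_singleton] at h1
    exact hne h1.symm

lemma incG_bridge (hE3 : ∀ e ∈ E, 3 ≤ e.card) (hce : ∀ e, ¬ HCutEdge E e) :
    ∀ a b, (incG E).Adj a b → ∃ p : (incG E).Walk a b, s(a, b) ∉ p.edges := by
  have key : ∀ (x : V) (e : {e : Finset V // e ∈ E}), x ∈ e.1 →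
      ∃ p : (incG E).Walk (Sum.inl x) (Sum.inr e), s(Sum.inl x, Sum.inr e) ∉ p.edges := by
    classical
    intro x e hxe
    by_contra hno
    push_neg at hno
    set A : Set (V ⊕ {e : Finset V // e ∈ E}) :=
      {z | ∃ p : (incG E).Walk (Sum.inl x) z, s(Sum.inl x, Sum.inr e) ∉ p.edges} with hA
    have hxA : Sum.inl x ∈ A := ⟨Walk.nil, by simp⟩
    have heA : Sum.inr e ∉ A := fun ⟨p, hp⟩ => hp (hno p)
    -- edges other than s(inl x, inr e) are usable
    have hnekey : ∀ (y : V) (f : {e : Finset V // e ∈ E}), (y ≠ x ∨ f ≠ e) →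
        s(Sum.inl y, Sum.inr f) ≠ s(Sum.inl x, Sum.inr e) := by
      intro y f hyf hs
      rw [Sym2.eq_iff] at hs
      rcases hs with ⟨h1, h2⟩ | ⟨h1, h2⟩
      · rw [Sum.inl.injEq] at h1; rw [Sum.inr.injEq] at h2
        rcases hyf with h | h
        · exact h h1
        · exact h h2
      · exact absurd h1 (by simp)
    refine hce e.1 ⟨e.2, {y | Sum.inl y ∈ A}, {y | Sum.inl y ∉ A}, ⟨x, hxA⟩, ?_, ?_, fun y => ?_, ?_⟩
    · -- second part nonempty : any other vertex of e
      have hcard : (e.1.erase x).Nonempty := by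
        rw [← Finset.card_pos, Finset.card_erase_of_mem hxe]
        have := hE3 e.1 e.2; omega
      obtain ⟨y, hy⟩ := hcard
      refine ⟨y, fun hyA => heA ?_⟩
      exact avoid_closure_edge hyA (incG_adj_of_mem (Finset.mem_of_mem_erase hy))
        (hnekey y e (Or.inl (Finset.ne_of_mem_erase hy)))
    · exact Set.disjoint_left.mpr fun y hy hy2 => hy2 hy
    · exact em _
    · intro f hf hfe
      have hfne : (⟨f, hf⟩ : {e : Finset V // e ∈ E}) ≠ e := fun h => hfe (congrArg Subtype.val h)
      rcases em (Sum.inr (⟨f, hf⟩ : {e : Finset V // e ∈ E}) ∈ A) with hfA | hfA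
      · left
        intro y hy
        rw [Finset.mem_coe] at hy
        exact avoid_closure_edge hfA (incG_adj_of_mem (e := ⟨f, hf⟩) hy).symm
          (by rw [Sym2.eq_swap]; exact hnekey y ⟨f, hf⟩ (Or.inr hfne))
      · right
        intro y hy hyA
        rw [Finset.mem_coe] at hy
        exact hfA (avoid_closure_edge hyA (incG_adj_of_mem (e := ⟨f, hf⟩) hy)
          (hnekey y ⟨f, hf⟩ (Or.inr hfne)))
  intro a b hadj
  rcases hadj with ⟨x, e, rfl, rfl, hxe⟩ | ⟨x, e, rfl, rfl, hxe⟩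
  · exact key x e hxe
  · obtain ⟨p, hp⟩ := key x e hxe
    refine ⟨p.reverse, ?_⟩
    rw [edges_reverse, List.mem_reverse, Sym2.eq_swap]
    exact hp

lemma incG_cut (hE3 : ∀ e ∈ E, 3 ≤ e.card) (hcv : ∀ v, ¬ HCutVertex E v)
    (hce : ∀ e, ¬ HCutEdge E e) :
    ∀ w a b, a ≠ w → b ≠ w → ∃ p : (incG E).Walk a b, w ∉ p.support := by
  classical
  intro w a b haw hbw
  by_contra hno
  push_neg at hno
  set A : Set (V ⊕ {e : Finset V // e ∈ E}) :=
    {z | ∃ p : (incG E).Walk a z, w ∉ p.support} with hA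
  have haA : a ∈ A := ⟨Walk.nil, by simpa using Ne.symm haw⟩
  have hbA : b ∉ A := fun ⟨p, hp⟩ => hp (hno p)
  have hclose : ∀ {z z'}, z ∈ A → (incG E).Adj z z' → z' ≠ w → z' ∈ A :=
    fun hz hadj hne => avoid_closure hz hadj hne
  obtain v | e := w
  · -- cut vertex case
    refine hcv v ⟨{y | y ≠ v ∧ Sum.inl y ∈ A}, {y | y ≠ v ∧ Sum.inl y ∉ A}, ?_, ?_,
      ?_, ?_, ?_, ?_, ?_⟩
    case refine_4 => exact fun h => h.1 rfl
    case refine_5 => exact fun h => h.1 rfl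
    case refine_6 =>
      intro y
      by_cases hyv : y = v
      · exact Or.inl hyv
      · rcases em (Sum.inl y ∈ A) with hyA | hyA
        · exact Or.inr (Or.inl ⟨hyv, hyA⟩)
        · exact Or.inr (Or.inr ⟨hyv, hyA⟩)
    · -- V₁ nonempty
      obtain xa | fa := a
      · exact ⟨xa, fun he => haw (by rw [he]), haA⟩
      · have hcard : (fa.1.erase v).Nonempty := by
          rw [← Finset.card_pos]
          have h1 := Finset.pred_card_le_card_erase (s := fa.1) (a := v)
          have := hE3 fa.1 fa.2; omega
        obtain ⟨y, hy⟩ := hcard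
        exact ⟨y, Finset.ne_of_mem_erase hy,
          hclose haA (incG_adj_of_mem (Finset.mem_of_mem_erase hy)).symm
            (by simp [Finset.ne_of_mem_erase hy])⟩
    · -- V₂ nonempty
      obtain xb | fb := b
      · exact ⟨xb, fun he => hbw (by rw [he]), hbA⟩
      · have hcard : (fb.1.erase v).Nonempty := by
          rw [← Finset.card_pos]
          have h1 := Finset.pred_card_le_card_erase (s := fb.1) (a := v)
          have := hE3 fb.1 fb.2; omega
        obtain ⟨y, hy⟩ := hcard
        refine ⟨y, Finset.ne_of_mem_erase hy, fun hyA => hbA ?_⟩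
        exact hclose hyA (incG_adj_of_mem (Finset.mem_of_mem_erase hy)) (by simp)
    · exact Set.disjoint_left.mpr fun y hy hy2 => hy2.2 hy.2
    · intro f hf
      rcases em (Sum.inr (⟨f, hf⟩ : {e : Finset V // e ∈ E}) ∈ A) with hfA | hfA
      · left
        intro y hy
        rw [Finset.mem_coe] at hy
        by_cases hyv : y = v
        · exact Set.mem_insert_iff.mpr (Or.inl hyv)
        · exact Set.mem_insert_iff.mpr (Or.inr ⟨hyv,
            hclose hfA (incG_adj_of_mem (e := ⟨f, hf⟩) hy).symm (by simp [hyv])⟩)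
      · right
        intro y hy
        rw [Finset.mem_coe] at hy
        by_cases hyv : y = v
        · exact Set.mem_insert_iff.mpr (Or.inl hyv)
        · refine Set.mem_insert_iff.mpr (Or.inr ⟨hyv, fun hyA => hfA ?_⟩)
          exact hclose hyA (incG_adj_of_mem (e := ⟨f, hf⟩) hy) (by simp)
  · -- cut hyperedge case
    refine hce e.1 ⟨e.2, {y | Sum.inl y ∈ A}, {y | Sum.inl y ∉ A}, ?_, ?_, ?_, ?_, ?_⟩
    case refine_3 => exact Set.disjoint_left.mpr fun y hy hy2 => hy2 hy
    case refine_4 => exact fun y => em _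
    · -- V₁ nonempty
      obtain xa | fa := a
      · exact ⟨xa, haA⟩
      · have hcard : fa.1.Nonempty := by
          rw [← Finset.card_pos]; have := hE3 fa.1 fa.2; omega
        obtain ⟨y, hy⟩ := hcard
        exact ⟨y, hclose haA (incG_adj_of_mem hy).symm (by simp)⟩
    · -- V₂ nonempty
      obtain xb | fb := b
      · exact ⟨xb, hbA⟩
      · have hcard : fb.1.Nonempty := by
          rw [← Finset.card_pos]; have := hE3 fb.1 fb.2; omega
        obtain ⟨y, hy⟩ := hcard
        exact ⟨y, fun hyA => hbA (hclose hyA (incG_adj_of_mem hy) hbw)⟩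
    · intro f hf hfe
      have hfw : (Sum.inr (⟨f, hf⟩ : {e : Finset V // e ∈ E}) : V ⊕ {e : Finset V // e ∈ E})
          ≠ Sum.inr e := by
        simp only [ne_eq, Sum.inr.injEq]
        intro h; exact hfe (congrArg Subtype.val h)
      rcases em (Sum.inr (⟨f, hf⟩ : {e : Finset V // e ∈ E}) ∈ A) with hfA | hfA
      · left
        intro y hy
        rw [Finset.mem_coe] at hy
        exact hclose hfA (incG_adj_of_mem (e := ⟨f, hf⟩) hy).symm (by simp)
      · right
        intro y hy hyA
        rw [Finset.mem_coe] at hy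
        exact hfA (hclose hyA (incG_adj_of_mem (e := ⟨f, hf⟩) hy) hfw)

end IncidencePart

section Part3
variable {W : Type*} {G : SimpleGraph W}

lemma support_getElem_eq_getVert {a b : W} (p : G.Walk a b) :
    ∀ (i : ℕ) (h : i < p.support.length), p.support[i]'h = p.getVert i := by
  induction p with
  | nil =>
    intro i h
    simp only [support_nil, List.length_singleton] at h
    obtain rfl : i = 0 := by omega
    rfl
  | cons hadj p ih =>
    intro i h
    cases i with
    | zero => rfl
    | succ n =>
      have h' : n < p.support.length := by
        simp only [support_cons, List.length_cons] at h; omega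
      simp only [support_cons, List.getElem_cons_succ, getVert_cons_succ]
      exact ih n h'

lemma cycle_getVert_inj {v : W} {c : G.Walk v v} (hc : c.IsCycle) :
    ∀ {i j : ℕ}, i < c.length → j < c.length → c.getVert i = c.getVert j → i = j := by
  have hnd : c.support.tail.Nodup := hc.support_nodup
  have hslen : c.support.length = c.length + 1 := length_support c
  have htlen : c.support.tail.length = c.length := by
    rw [List.length_tail, hslen]; rfl
  have hkey : ∀ (t : ℕ) (ht : t < c.length),
      c.support.tail[t]'(by omega) = c.getVert (t + 1) := by
    intro t ht
    have h2 : c.support[t+1]'(by omega) = c.getVert (t + 1) :=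
      support_getElem_eq_getVert c (t+1) (by omega)
    rw [← h2]
    have h1 : c.support = v :: c.support.tail := support_eq_cons c
    have h4 : c.support[t+1]'(by omega) = (v :: c.support.tail)[t+1]'(by
        simp only [List.length_cons]; omega) := List.getElem_of_eq h1 _
    rw [h4, List.getElem_cons_succ]
  have hinj := List.nodup_iff_injective_get.mp hnd
  have haux : ∀ {j : ℕ}, 0 < j → j < c.length → c.getVert j ≠ c.getVert 0 := by
    intro j hj0 hj habs
    have hlpos : 0 < c.length := by omega
    have e1 : c.support.tail.get ⟨j - 1, by omega⟩ = c.getVert j := by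
      rw [List.get_eq_getElem]
      have := hkey (j-1) (by omega)
      rw [this]; congr 1; omega
    have e2 : c.support.tail.get ⟨c.length - 1, by omega⟩ = c.getVert c.length := by
      rw [List.get_eq_getElem]
      have := hkey (c.length - 1) (by omega)
      rw [this]; congr 1; omega
    have hv0 : c.getVert j = c.getVert c.length := by
      rw [habs, getVert_zero, getVert_length]
    have : (⟨j - 1, by omega⟩ : Fin c.support.tail.length) = ⟨c.length - 1, by omega⟩ :=
      hinj (by rw [e1, e2, hv0])
    have h3 : j - 1 = c.length - 1 := congrArg Fin.val this
    omega
  intro i j hi hj hij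
  rcases Nat.eq_zero_or_pos i with rfl | hi0
  · rcases Nat.eq_zero_or_pos j with rfl | hj0
    · rfl
    · exact absurd hij.symm (haux hj0 hj)
  · rcases Nat.eq_zero_or_pos j with rfl | hj0
    · exact absurd hij (haux hi0 hi)
    · have e1 : c.support.tail.get ⟨i - 1, by omega⟩ = c.getVert i := by
        rw [List.get_eq_getElem]
        have := hkey (i-1) (by omega)
        rw [this]; congr 1; omega
      have e2 : c.support.tail.get ⟨j - 1, by omega⟩ = c.getVert j := by
        rw [List.get_eq_getElem]
        have := hkey (j-1) (by omega)
        rw [this]; congr 1; omega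
      have : (⟨i - 1, by omega⟩ : Fin c.support.tail.length) = ⟨j - 1, by omega⟩ :=
        hinj (by rw [e1, e2, hij])
      have h3 : i - 1 = j - 1 := congrArg Fin.val this
      omega

end Part3


section Alternation
variable {V : Type*} {E : Finset (Finset V)}

lemma incG_alternation {a : V} {t : V ⊕ {e : Finset V // e ∈ E}}
    (p : (incG E).Walk (Sum.inl a) t) :
    ∀ i, i ≤ p.length → ((p.getVert i).isLeft = true ↔ Even i) := by
  intro i
  induction i with
  | zero => intro _; simp [getVert_zero]
  | succ n ih =>
    intro h
    have hn := ih (by omega)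
    have hadj := p.adj_getVert_succ (i := n) (by omega)
    rcases hadj with ⟨x, e, h1, h2, _⟩ | ⟨x, e, h1, h2, _⟩
    · rw [h2]
      rw [h1] at hn
      have hEn : Even n := hn.mp (by simp)
      exact iff_of_false (by simp) (by simp [Nat.even_add_one, hEn])
    · rw [h1]
      rw [h2] at hn
      have hOn : ¬ Even n := fun he => by simpa using hn.mpr he
      exact iff_of_true (by simp) (by simp [Nat.even_add_one, hOn])

end Alternation


/-- In a 2-connected `r`-uniform hypergraph on `n ≥ r ≥ 3` vertices, any two distinct
vertices lie on a common Berge cycle (as defining vertices). -/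
theorem bergeCycle_through_two_vertices {V : Type*} [Fintype V]
    (E : Finset (Finset V)) (n r : ℕ) (hn : Fintype.card V = n)
    (hnr : n ≥ r) (hr : r ≥ 3) (huniform : ∀ e ∈ E, e.card = r)
    (h2conn : HTwoConnected E) (u v : V) (huv : u ≠ v) :
    HasBergeCycleThrough E u v := by
  classical
  obtain ⟨hconn, hcv, hce⟩ := h2conn
  have hE3 : ∀ e ∈ E, 3 ≤ e.card := fun e he => by rw [huniform e he]; exact hr
  have hcard3 : 3 ≤ Fintype.card V := by omega
  obtain ⟨z, hzu, hzv⟩ : ∃ z : V, z ≠ u ∧ z ≠ v := by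
    have h1 : ({u, v} : Finset V).card ≤ 2 := by
      apply le_trans (Finset.card_insert_le _ _); simp
    have h2 : (({u, v} : Finset V)ᶜ).Nonempty := by
      rw [← Finset.card_pos, Finset.card_compl]
      omega
    obtain ⟨z, hz⟩ := h2
    rw [Finset.mem_compl, Finset.mem_insert, Finset.mem_singleton] at hz
    push_neg at hz
    exact ⟨z, hz.1, hz.2⟩
  have hbridge := incG_bridge (E := E) hE3 hce
  have hcut := incG_cut (E := E) hE3 hcv hce
  have hne_uv : (Sum.inl u : V ⊕ {e : Finset V // e ∈ E}) ≠ Sum.inl v := by simp [huv]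
  obtain ⟨p, -⟩ := hcut (Sum.inl z) (Sum.inl u) (Sum.inl v)
    (by simp only [ne_eq, Sum.inl.injEq]; exact fun h => hzu h.symm)
    (by simp only [ne_eq, Sum.inl.injEq]; exact fun h => hzv h.symm)
  obtain ⟨c, hcyc, huc⟩ := graph_cycle_through (incG E) hcut hbridge p.length
    (Sum.inl u) (Sum.inl v) hne_uv p le_rfl
  have halt := incG_alternation c
  have hlen3 := hcyc.three_le_length
  have heven : Even c.length := by
    have h1 := halt c.length le_rfl
    rw [getVert_length] at h1
    exact h1.mp (by simp)
  obtain ⟨k, hk⟩ := heven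
  have hk2 : 2 ≤ k := by omega
  have hclen : c.length = 2 * k := by omega
  refine ⟨k - 2, ?_⟩
  have hkm : k - 2 + 2 = k := by omega
  have hform_even : ∀ i, i ≤ c.length → Even i → ∃ x : V, c.getVert i = Sum.inl x := by
    intro i hi he
    rcases hx : c.getVert i with x | ee
    · exact ⟨x, rfl⟩
    · exfalso; have := (halt i hi).mpr he; rw [hx] at this; simp at this
  have hform_odd : ∀ i, i ≤ c.length → ¬ Even i →
      ∃ ee : {e : Finset V // e ∈ E}, c.getVert i = Sum.inr ee := by
    intro i hi ho
    rcases hx : c.getVert i with x | ee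
    · exact absurd ((halt i hi).mp (by rw [hx]; simp)) ho
    · exact ⟨ee, rfl⟩
  have hgetl : ∀ i : Fin (k - 2 + 2), ∃ x, c.getVert (2 * i.val) = Sum.inl x := by
    intro i; have hi := i.2; exact hform_even _ (by omega) ⟨i.val, by ring⟩
  have hgetr : ∀ i : Fin (k - 2 + 2),
      ∃ ee : {e : Finset V // e ∈ E}, c.getVert (2 * i.val + 1) = Sum.inr ee := by
    intro i; have hi := i.2
    refine hform_odd _ (by omega) ?_
    rintro ⟨t, ht⟩; omega
  choose xs hxs using hgetl
  choose es hes using hgetr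
  have hx0 : xs 0 = v := by
    have h0 := hxs 0
    rw [show (2 * ((0 : Fin (k-2+2))).val) = 0 by simp, getVert_zero] at h0
    exact (Sum.inl_injective h0).symm
  refine ⟨xs, fun i => (es i).1, ?_, ?_, ?_, ⟨0, hx0⟩, ?_⟩
  · intro i j hij
    have h1 : c.getVert (2 * i.val) = c.getVert (2 * j.val) := by rw [hxs i, hxs j, hij]
    have h2 := cycle_getVert_inj hcyc (i := 2 * i.val) (j := 2 * j.val)
      (by have := i.2; omega) (by have := j.2; omega) h1
    exact Fin.ext (by omega)
  · intro i j hij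
    have hsub : es i = es j := Subtype.ext hij
    have h1 : c.getVert (2 * i.val + 1) = c.getVert (2 * j.val + 1) := by
      rw [hes i, hes j, hsub]
    have h2 := cycle_getVert_inj hcyc (i := 2 * i.val + 1) (j := 2 * j.val + 1)
      (by have := i.2; omega) (by have := j.2; omega) h1
    exact Fin.ext (by omega)
  · have hmem : Sum.inl u ∈ c.support := huc
    rw [mem_support_iff_exists_getVert] at hmem
    obtain ⟨jn, hj, hjle⟩ := hmem
    have hevj : Even jn := (halt jn hjle).mp (by rw [hj]; simp)
    obtain ⟨t, ht⟩ := hevj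
    have htlt : t < k := by
      rcases eq_or_lt_of_le (show t ≤ k by omega) with rfl | h
      · exfalso
        rw [show jn = c.length by omega, getVert_length] at hj
        exact huv (Sum.inl_injective hj.symm)
      · exact h
    refine ⟨⟨t, by omega⟩, ?_⟩
    have h5 := hxs ⟨t, by omega⟩
    rw [show (2 * ((⟨t, by omega⟩ : Fin (k-2+2))).val) = jn by simp; omega] at h5
    rw [hj] at h5
    exact (Sum.inl_injective h5).symm
  · intro i
    refine ⟨(es i).2, ?_, ?_⟩
    · have hadj := c.adj_getVert_succ (i := 2 * i.val) (by have := i.2; omega)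
      rw [hxs i, hes i] at hadj
      exact incG_adj_left hadj
    · have hadj := c.adj_getVert_succ (i := 2 * i.val + 1) (by have := i.2; omega)
      rw [hes i] at hadj
      have hnext : c.getVert (2 * i.val + 1 + 1) = Sum.inl (xs (i + 1)) := by
        by_cases hlast : i.val + 1 = k - 2 + 2
        · have hval : ((i + 1 : Fin (k - 2 + 2))).val = 0 := by
            rw [Fin.val_add, Fin.val_one, hlast, Nat.mod_self]
          have h2 : 2 * i.val + 1 + 1 = c.length := by omega
          rw [h2, getVert_length, show ((i + 1 : Fin (k - 2 + 2))) = 0 from Fin.ext hval, hx0]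
        · have hlt : i.val + 1 < k - 2 + 2 := lt_of_le_of_ne i.2 hlast
          have hval : ((i + 1 : Fin (k - 2 + 2))).val = i.val + 1 := by
            rw [Fin.val_add, Fin.val_one, Nat.mod_eq_of_lt hlt]
          have h5 := hxs (i + 1)
          rw [hval] at h5
          rw [show 2 * i.val + 1 + 1 = 2 * (i.val + 1) by ring]
          exact h5
      rw [hnext] at hadj
      exact incG_adj_right hadj
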